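/- arXiv:math/0510557 — 2 statements merged into one kernel-verified Lean document; each statement's English description precedes it below -/
import Mathlib

section
/- (Gradient estimate for a convex function squeezed between affine and quadratic bounds, used in the proof of Theorem 4.) Let F : ℝ^m → ℝ be convex and continuously differentiable, and suppose there exist constants α > 0, β ≥ 0, γ ≥ 0 such that −β ≤ F(v) ≤ (α/2)|v|^2 + γ for all v ∈ ℝ^m. Then for every v ∈ ℝ^m, (1/(2α)) |∇F(v)|^2 ≤ ⟨∇F(v), v⟩ + β + γ. -/
/-- Supporting hyperplane inequality for a convex differentiable function. -/
lemma convex_support_ineq {m : ℕ} {F : (Fin m → ℝ) → ℝ}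
    (hconv : ConvexOn ℝ Set.univ F) (hF : ContDiff ℝ 1 F)
    (v w : Fin m → ℝ) :
    F v + fderiv ℝ F v (w - v) ≤ F w := by
  set c : Fin m → ℝ := w - v with hc
  have hdiff : DifferentiableAt ℝ F v :=
    (hF.differentiable one_ne_zero).differentiableAt
  have hcurve : HasDerivAt (fun t : ℝ => v + t • c) c 0 := by
    simpa using ((hasDerivAt_id (0:ℝ)).smul_const c).const_add v
  have hF0 : HasFDerivAt F (fderiv ℝ F v) (v + (0:ℝ) • c) := by
    simpa using hdiff.hasFDerivAt
  have hφ : HasDerivAt (fun t : ℝ => F (v + t • c)) (fderiv ℝ F v c) 0 :=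
    hF0.comp_hasDerivAt 0 hcurve
  have hφconv : ConvexOn ℝ Set.univ (fun t : ℝ => F (v + t • c)) := by
    have := hconv.comp_affineMap
      (AffineMap.lineMap v w : ℝ →ᵃ[ℝ] (Fin m → ℝ))
    simp only [Set.preimage_univ] at this
    convert this using 1
    any_goals rfl
    funext t
    simp [Function.comp, AffineMap.lineMap_apply, hc, add_comm]
  have hs := hφconv.le_slope_of_hasDerivAt (Set.mem_univ 0) (Set.mem_univ 1)
    one_pos hφ
  have : fderiv ℝ F v c ≤ F (v + c) - F v := by
    simpa [slope_def_field] using hs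
  have hvc : v + c = w := by simp [hc]
  rw [hvc] at this
  linarith

/-- gradient estimate for a convex `C¹` function squeezed between an
affine lower bound and a quadratic upper bound:
`(1/(2α)) |∇F(v)|² ≤ ⟨∇F(v), v⟩ + β + γ`. -/
theorem convex_gradient_estimate
    (m : ℕ) (hm : 0 < m)
    (F : (Fin m → ℝ) → ℝ)
    (hconv : ConvexOn ℝ Set.univ F)
    (hF : ContDiff ℝ 1 F)
    (α β γ : ℝ) (hα : 0 < α) (hβ : 0 ≤ β) (hγ : 0 ≤ γ)
    (hlow : ∀ v : Fin m → ℝ, -β ≤ F v)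
    (hhigh : ∀ v : Fin m → ℝ, F v ≤ α / 2 * (∑ i, (v i) ^ 2) + γ)
    (v : Fin m → ℝ) :
    1 / (2 * α) * ∑ i, (fderiv ℝ F v (Pi.single i 1)) ^ 2
      ≤ (∑ i, fderiv ℝ F v (Pi.single i 1) * v i) + β + γ := by
  set L := fderiv ℝ F v with hL
  set g : Fin m → ℝ := fun i => L (Pi.single i 1) with hg
  have hLapp : ∀ u : Fin m → ℝ, L u = ∑ i, u i * g i := by
    intro u
    have hu : u = ∑ i, u i • (Pi.single i 1 : Fin m → ℝ) := by
      ext j; simp [Pi.single_apply]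
    conv_lhs => rw [hu]
    rw [map_sum]
    simp [hg, smul_eq_mul]
  set w : Fin m → ℝ := (1/α) • g with hw
  have hkey := convex_support_ineq hconv hF v w
  have hLwv : L (w - v) = (1/α) * (∑ i, (g i)^2) - ∑ i, g i * v i := by
    rw [hLapp, hw]
    simp only [Pi.smul_apply, smul_eq_mul, Pi.sub_apply]
    rw [Finset.mul_sum, ← Finset.sum_sub_distrib]
    exact Finset.sum_congr rfl fun i _ => by ring
  have hFw := hhigh w
  have hwsum : ∑ i, (w i)^2 = (1/α)^2 * ∑ i, (g i)^2 := by
    rw [Finset.mul_sum]; congr 1; ext i; simp [hw]; ring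
  have hFv := hlow v
  rw [hwsum] at hFw
  rw [hLwv] at hkey
  have hαne : α ≠ 0 := ne_of_gt hα
  have h1 : α/2 * ((1/α)^2 * ∑ i, (g i)^2) = 1/(2*α) * ∑ i, (g i)^2 := by
    field_simp
  rw [h1] at hFw
  have hgv : ∑ i, g i * v i = ∑ i, fderiv ℝ F v (Pi.single i 1) * v i := rfl
  have hS : 0 ≤ ∑ i, (g i)^2 := Finset.sum_nonneg fun i _ => sq_nonneg _
  have h2 : (1/α) * (∑ i, (g i)^2) - 1/(2*α) * ∑ i, (g i)^2
      = 1/(2*α) * ∑ i, (g i)^2 := by field_simp; ring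
  -- combine: -β + (1/α) S - ⟨g,v⟩ ≤ F v + L(w-v) ≤ F w ≤ S/(2α) + γ
  nlinarith [hkey, hFw, hFv, h2]
end

section
/- (Integrated intermediate inequality in the proof of Theorem 4.) Let H : ℝ^p × ℝ^{n+np} → ℝ be measurable in t for each u and continuously differentiable and convex in u for each t ∈ T_0, and suppose there are constants α > 0, β ≥ 0, γ ≥ 0 with −β ≤ H(t,u) ≤ (α/2)|u|^2 + γ for all t ∈ T_0, u ∈ ℝ^{n+np}. Then every continuously differentiable, multiple periodic (with period T) solution u = (x,q) of (δ⊗J) ∂u/∂t + ∇_u H(t, u(t)) = 0 satisfies (1/(2α)) ∫_{T_0} |(δ⊗J) ∂u/∂t|^2 dt + ∫_{T_0} ⟨(δ⊗J) ∂u/∂t, u(t)⟩ dt ≤ (β+γ) T^1⋯T^p. -/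
open MeasureTheory Real

/-- The period parallelepiped `T₀ = [0,T¹] × ⋯ × [0,Tᵖ] ⊆ ℝᵖ`. -/
def periodBox {p : ℕ} (T : Fin p → ℝ) : Set (Fin p → ℝ) :=
  Set.univ.pi fun i => Set.Icc 0 (T i)

/-- `u` is multiple periodic with period `T`. -/
def MultiPeriodic {p : ℕ} {E : Type*} (T : Fin p → ℝ) (u : (Fin p → ℝ) → E) : Prop :=
  ∀ (k : Fin p → ℤ) (t : Fin p → ℝ), u (fun i => t i + (k i : ℝ) * T i) = u t

/-- `max_i T^i`. -/
noncomputable def maxPeriod {p : ℕ} (hp : 0 < p) (T : Fin p → ℝ) : ℝ :=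
  Finset.univ.sup' ⟨⟨0, hp⟩, Finset.mem_univ _⟩ T

/-- The Euclidean norm of `w = (x,q) ∈ ℝ^{n+np}`. -/
noncomputable def euclNorm {p n : ℕ} (w : (Fin n → ℝ) × (Fin n → Fin p → ℝ)) : ℝ :=
  Real.sqrt ((∑ i, (w.1 i) ^ 2) + ∑ i, ∑ α, (w.2 i α) ^ 2)

/-- `u = (x,q)` solves the multi-time Hamilton system
`(δ⊗J) ∂u/∂t + ∇_u H(t,u(t)) = 0` at every `t` of the period box, i.e.
`Σ_α ∂q_i^α/∂t^α = −∂H/∂x^i` and `∂x^i/∂t^β = ∂H/∂q_i^β`. -/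
def IsHamiltonSolution {p n : ℕ} (T : Fin p → ℝ)
    (H : (Fin p → ℝ) → (Fin n → ℝ) × (Fin n → Fin p → ℝ) → ℝ)
    (x : (Fin p → ℝ) → (Fin n → ℝ)) (q : (Fin p → ℝ) → (Fin n → Fin p → ℝ)) : Prop :=
  ∀ t ∈ periodBox T,
    (∀ i, (∑ α, fderiv ℝ q t (Pi.single α 1) i α)
        = - fderiv ℝ (H t) (x t, q t) ((Pi.single i 1 : Fin n → ℝ), 0)) ∧
    (∀ i β, fderiv ℝ x t (Pi.single β 1) i
        = fderiv ℝ (H t) (x t, q t) ((0 : Fin n → ℝ), Pi.single i (Pi.single β 1)))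

section Aux

variable {p n : ℕ}

/-- Auxiliary: the phase space. -/
abbrev Esp (p n : ℕ) := (Fin n → ℝ) × (Fin n → Fin p → ℝ)

/-- Auxiliary: the coordinate inner product on `ℝ^{n+np}`. -/
def ip (v w : Esp p n) : ℝ := (∑ i, v.1 i * w.1 i) + ∑ i, ∑ a, v.2 i a * w.2 i a

lemma decomp (z : Esp p n) :
    z = (∑ i, z.1 i • ((Pi.single i 1 : Fin n → ℝ), (0 : Fin n → Fin p → ℝ)))
        + ∑ i, ∑ b, z.2 i b • ((0 : Fin n → ℝ),
            (Pi.single i (Pi.single b 1) : Fin n → Fin p → ℝ)) := by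
  refine Prod.ext ?_ ?_
  · funext j
    simp [Prod.fst_sum, Finset.sum_apply, Pi.single_apply]
  · funext j b
    simp [Prod.snd_sum, Finset.sum_apply, Pi.single_apply, Finset.sum_ite_eq']

lemma fderiv_eq_ip (D : Esp p n →L[ℝ] ℝ) (v : Esp p n)
    (h1 : ∀ i, v.1 i = - D ((Pi.single i 1 : Fin n → ℝ), 0))
    (h2 : ∀ i b, v.2 i b = - D ((0 : Fin n → ℝ), Pi.single i (Pi.single b 1)))
    (z : Esp p n) :
    D z = - ip v z := by
  conv_lhs => rw [decomp z]
  rw [map_add, map_sum]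
  simp only [_root_.map_smul, map_sum, smul_eq_mul]
  have e1 : ∀ i, D ((Pi.single i 1 : Fin n → ℝ), 0) = - v.1 i := fun i => by rw [h1 i]; ring
  have e2 : ∀ i b, D ((0 : Fin n → ℝ), Pi.single i (Pi.single b 1)) = - v.2 i b :=
    fun i b => by rw [h2 i b]; ring
  simp only [e1, e2]
  unfold ip
  rw [neg_add]
  congr 1
  · rw [← Finset.sum_neg_distrib]; exact Finset.sum_congr rfl fun i _ => by ring
  · rw [← Finset.sum_neg_distrib]
    refine Finset.sum_congr rfl fun i _ => ?_
    rw [← Finset.sum_neg_distrib]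
    exact Finset.sum_congr rfl fun b _ => by ring

lemma ip_smul_left (c : ℝ) (v z : Esp p n) : ip (c • v) z = c * ip v z := by
  simp only [ip, Prod.smul_fst, Prod.smul_snd, Pi.smul_apply, smul_eq_mul, mul_add,
    Finset.mul_sum]
  congr 1
  · exact Finset.sum_congr rfl fun i _ => by ring
  · refine Finset.sum_congr rfl fun i _ => ?_
    exact Finset.sum_congr rfl fun b _ => by ring

lemma ip_comm (v z : Esp p n) : ip v z = ip z v := by
  simp only [ip]
  congr 1
  · exact Finset.sum_congr rfl fun i _ => by ring
  · exact Finset.sum_congr rfl fun i _ => Finset.sum_congr rfl fun b _ => by ring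

lemma ip_sub (v a b : Esp p n) : ip v (a - b) = ip v a - ip v b := by
  simp only [ip, Prod.fst_sub, Prod.snd_sub, Pi.sub_apply, mul_sub,
    Finset.sum_sub_distrib]
  ring

lemma euclNorm_sq (z : Esp p n) : euclNorm z ^ 2 = ip z z := by
  rw [euclNorm, sq_sqrt (by positivity)]
  simp only [ip, pow_two]

lemma pointwise_bound
    (Ht : Esp p n → ℝ) (hC1 : ContDiff ℝ 1 Ht) (hconv : ConvexOn ℝ Set.univ Ht)
    (α β γ : ℝ) (hα : 0 < α)
    (hlow : ∀ w, -β ≤ Ht w)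
    (hhigh : ∀ w, Ht w ≤ α / 2 * (euclNorm w) ^ 2 + γ)
    (u v : Esp p n)
    (h1 : ∀ i, v.1 i = - fderiv ℝ Ht u ((Pi.single i 1 : Fin n → ℝ), 0))
    (h2 : ∀ i b, v.2 i b = - fderiv ℝ Ht u ((0 : Fin n → ℝ), Pi.single i (Pi.single b 1))) :
    1 / (2 * α) * ip v v + ip v u ≤ β + γ := by
  set D := fderiv ℝ Ht u with hD
  have hDeq : ∀ z, D z = - ip v z := fderiv_eq_ip D v h1 h2
  set w : Esp p n := (-(1/α)) • v with hw
  have hline : HasDerivAt (fun s : ℝ => s • (w - u) + u) (w - u) 0 := by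
    simpa using ((hasDerivAt_id (0:ℝ)).smul_const (w - u)).add_const u
  have hfd : HasFDerivAt Ht D ((fun s : ℝ => s • (w - u) + u) 0) := by
    simpa using (hC1.differentiable one_ne_zero u).hasFDerivAt
  have hcomp : HasDerivAt (fun s : ℝ => Ht (s • (w - u) + u)) (D (w - u)) 0 :=
    hfd.comp_hasDerivAt 0 hline
  have hcv : ConvexOn ℝ Set.univ (fun s : ℝ => Ht (s • (w - u) + u)) := by
    have h := hconv.comp_affineMap (AffineMap.lineMap u w : ℝ →ᵃ[ℝ] Esp p n)
    have heq : (fun s : ℝ => Ht (s • (w - u) + u))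
        = fun s : ℝ => Ht ((1 - s) • u + s • w) := by
      funext s; congr 1; rw [smul_sub, sub_smul, one_smul]; abel
    rw [heq]
    simpa [Function.comp_def, AffineMap.lineMap_apply_module] using h
  have hkey : D (w - u) ≤ Ht w - Ht u := by
    have hs := hcv.le_slope_of_hasDerivAt (Set.mem_univ (0:ℝ)) (Set.mem_univ 1)
      one_pos hcomp
    simpa [slope_def_field] using hs
  have hDwu : D (w - u) = (1/α) * ip v v + ip v u := by
    rw [hDeq, ip_sub, hw, ip_comm v _, ip_smul_left]
    ring
  have hwsq : α / 2 * (euclNorm w) ^ 2 = 1 / (2*α) * ip v v := by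
    rw [euclNorm_sq, hw, ip_smul_left, ip_comm, ip_smul_left]
    field_simp
  have h3 := hhigh w
  have h4 := hlow u
  rw [hwsq] at h3
  have h1α : (1:ℝ)/α = 1/(2*α) + 1/(2*α) := by field_simp; ring
  have h5 : (1/α) * ip v v = 1/(2*α) * ip v v + 1/(2*α) * ip v v := by
    rw [h1α]; ring
  linarith [hkey, hDwu]

end Aux

/-- integrated intermediate inequality in the proof of Theorem 4:
for a Hamiltonian with `−β ≤ H(t,u) ≤ (α/2)|u|² + γ`, every `C¹` multiply periodic
solution satisfies
`(1/(2α)) ∫ |(δ⊗J)∂u/∂t|² + ∫ ⟨(δ⊗J)∂u/∂t, u⟩ ≤ (β+γ) T¹⋯Tᵖ`. -/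
theorem hamilton_intermediate_inequality
    (p n : ℕ) (hp : 0 < p) (hn : 0 < n)
    (T : Fin p → ℝ) (hT : ∀ i, 0 < T i)
    (H : (Fin p → ℝ) → (Fin n → ℝ) × (Fin n → Fin p → ℝ) → ℝ)
    (hmeas : ∀ w, Measurable fun t => H t w)
    (hC1 : ∀ t ∈ periodBox T, ContDiff ℝ 1 (H t))
    (hconv : ∀ t ∈ periodBox T, ConvexOn ℝ Set.univ (H t))
    (α β γ : ℝ)
    (hα : 0 < α) (hβ : 0 ≤ β) (hγ : 0 ≤ γ)
    (hlow : ∀ t ∈ periodBox T, ∀ w : (Fin n → ℝ) × (Fin n → Fin p → ℝ), -β ≤ H t w)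
    (hhigh : ∀ t ∈ periodBox T, ∀ w : (Fin n → ℝ) × (Fin n → Fin p → ℝ),
      H t w ≤ α / 2 * (euclNorm w) ^ 2 + γ)
    (x : (Fin p → ℝ) → (Fin n → ℝ)) (q : (Fin p → ℝ) → (Fin n → Fin p → ℝ))
    (hx : ContDiff ℝ 1 x) (hq : ContDiff ℝ 1 q)
    (hxper : MultiPeriodic T x) (hqper : MultiPeriodic T q)
    (hsol : IsHamiltonSolution T H x q) :
    1 / (2 * α) *
        (∫ t in periodBox T,
          ((∑ i, (∑ a, fderiv ℝ q t (Pi.single a 1) i a) ^ 2)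
            + ∑ i, ∑ b, (fderiv ℝ x t (Pi.single b 1) i) ^ 2))
      + (∫ t in periodBox T,
          ((∑ i, (∑ a, fderiv ℝ q t (Pi.single a 1) i a) * x t i)
            - ∑ i, ∑ b, (fderiv ℝ x t (Pi.single b 1) i) * q t i b))
      ≤ (β + γ) * ∏ i, T i := by
  classical
  set F : (Fin p → ℝ) → ℝ := fun t =>
    (∑ i, (∑ a, fderiv ℝ q t (Pi.single a 1) i a) ^ 2)
      + ∑ i, ∑ b, (fderiv ℝ x t (Pi.single b 1) i) ^ 2 with hF
  set G : (Fin p → ℝ) → ℝ := fun t =>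
    (∑ i, (∑ a, fderiv ℝ q t (Pi.single a 1) i a) * x t i)
      - ∑ i, ∑ b, (fderiv ℝ x t (Pi.single b 1) i) * q t i b with hG
  -- continuity
  have hdx : Continuous fun t => fderiv ℝ x t := hx.continuous_fderiv one_ne_zero
  have hdq : Continuous fun t => fderiv ℝ q t := hq.continuous_fderiv one_ne_zero
  have hdxc : ∀ (b : Fin p) (i : Fin n),
      Continuous fun t => fderiv ℝ x t (Pi.single b 1) i :=
    fun b i => (continuous_apply i).comp (hdx.clm_apply continuous_const)
  have hdqc : ∀ (a : Fin p) (i : Fin n) (c : Fin p),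
      Continuous fun t => fderiv ℝ q t (Pi.single a 1) i c :=
    fun a i c => ((continuous_apply c).comp
      ((continuous_apply i).comp (hdq.clm_apply continuous_const)))
  have hFc : Continuous F := by
    apply Continuous.add
    · exact continuous_finset_sum _ fun i _ =>
        (continuous_finset_sum _ fun a _ => hdqc a i a).pow 2
    · exact continuous_finset_sum _ fun i _ =>
        continuous_finset_sum _ fun b _ => (hdxc b i).pow 2
  have hGc : Continuous G := by
    apply Continuous.sub
    · exact continuous_finset_sum _ fun i _ =>
        (continuous_finset_sum _ fun a _ => hdqc a i a).mul
          ((continuous_apply i).comp hx.continuous)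
    · exact continuous_finset_sum _ fun i _ =>
        continuous_finset_sum _ fun b _ => (hdxc b i).mul
          (((continuous_apply b).comp ((continuous_apply i).comp hq.continuous)))
  have hcpt : IsCompact (periodBox T) := isCompact_univ_pi fun i => isCompact_Icc
  have hms : MeasurableSet (periodBox T) :=
    MeasurableSet.univ_pi fun i => measurableSet_Icc
  have hFi : IntegrableOn F (periodBox T) := hFc.continuousOn.integrableOn_compact hcpt
  have hGi : IntegrableOn G (periodBox T) := hGc.continuousOn.integrableOn_compact hcpt
  -- pointwise bound
  have hpt : ∀ t ∈ periodBox T, 1 / (2 * α) * F t + G t ≤ β + γ := by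
    intro t ht
    set v : Esp p n := (fun i => ∑ a, fderiv ℝ q t (Pi.single a 1) i a,
      fun i b => -(fderiv ℝ x t (Pi.single b 1) i)) with hv
    have h1 : ∀ i, v.1 i = - fderiv ℝ (H t) (x t, q t) ((Pi.single i 1 : Fin n → ℝ), 0) :=
      (hsol t ht).1
    have h2 : ∀ i b, v.2 i b
        = - fderiv ℝ (H t) (x t, q t) ((0 : Fin n → ℝ), Pi.single i (Pi.single b 1)) := by
      intro i b
      simp only [hv]
      rw [(hsol t ht).2 i b]
    have hb := pointwise_bound (H t) (hC1 t ht) (hconv t ht) α β γ hα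
      (hlow t ht) (hhigh t ht) (x t, q t) v h1 h2
    have hvv : ip v v = F t := by
      simp only [ip, hv, hF, pow_two, neg_mul_neg]
    have hvu : ip v (x t, q t) = G t := by
      simp only [ip, hv, hG]
      rw [sub_eq_add_neg, ← Finset.sum_neg_distrib]
      congr 1
      refine Finset.sum_congr rfl fun i _ => ?_
      rw [← Finset.sum_neg_distrib]
      exact Finset.sum_congr rfl fun b _ => by ring
    rw [hvv, hvu] at hb
    exact hb
  -- integrate
  have hcomb : 1 / (2 * α) * (∫ t in periodBox T, F t) + ∫ t in periodBox T, G t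
      = ∫ t in periodBox T, (1 / (2 * α) * F t + G t) := by
    rw [integral_add (hFi.const_mul _) hGi, MeasureTheory.integral_const_mul]
  rw [hcomb]
  have hconst : (∫ _t in periodBox T, (β + γ))
      = ((volume (periodBox T)).toReal) * (β + γ) := by
    rw [setIntegral_const, smul_eq_mul, Measure.real]
  have hvol : (volume (periodBox T)).toReal = ∏ i, T i := by
    have : volume (periodBox T) = ∏ i, ENNReal.ofReal (T i - 0) := by
      rw [periodBox, volume_pi_pi]
      simp [Real.volume_Icc]
    rw [this, ENNReal.toReal_prod]
    exact Finset.prod_congr rfl fun i _ => by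
      rw [sub_zero, ENNReal.toReal_ofReal (hT i).le]
  calc (∫ t in periodBox T, (1 / (2 * α) * F t + G t))
      ≤ ∫ _t in periodBox T, (β + γ) := by
        refine setIntegral_mono_on ((hFi.const_mul _).add hGi)
          (integrableOn_const hcpt.measure_lt_top.ne) hms hpt
    _ = (β + γ) * ∏ i, T i := by rw [hconst, hvol, mul_comm]
end
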